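/- Let X̄, Ȳ ∈ ℝ^{n×r} have full column rank, with smallest singular values σ_r(X̄) and σ_r(Ȳ), and let X̂ := X̄(X̄ᵀX̄)^{-1/2} and Ŷ := Ȳ(ȲᵀȲ)^{-1/2} be their polar (orthogonal) factors. Then ‖Ŷ − X̂‖_F ≤ (2/(σ_r(X̄) + σ_r(Ȳ))) ‖Ȳ − X̄‖_F. -/

import Mathlib

open Matrix
open scoped BigOperators

noncomputable section

/-- the Frobenius norm of a real matrix -/
def frob {n r : ℕ} (A : Matrix (Fin n) (Fin r) ℝ) : ℝ :=
  Real.sqrt (∑ i, ∑ j, (A i j) ^ 2)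

lemma psd_AtA {n r : ℕ} (A : Matrix (Fin n) (Fin r) ℝ) : (Aᵀ * A).PosSemidef := by
  simpa using Matrix.posSemidef_conjTranspose_mul_self A

/-- the positive semidefinite square root, as `Matrix.PosSemidef.sqrt` was defined in the older Mathlib -/
def posSemidefSqrt {m : ℕ} {M : Matrix (Fin m) (Fin m) ℝ} (hM : M.PosSemidef) :
    Matrix (Fin m) (Fin m) ℝ :=
  hM.1.eigenvectorUnitary.1 * diagonal ((↑) ∘ (Real.sqrt ∘ hM.1.eigenvalues)) *
  (star hM.1.eigenvectorUnitary : Matrix (Fin m) (Fin m) ℝ)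

/-- the polar factor A(AᵀA)^{-1/2} -/
def polarFactor {n r : ℕ} (A : Matrix (Fin n) (Fin r) ℝ) : Matrix (Fin n) (Fin r) ℝ :=
  A * (posSemidefSqrt (psd_AtA A))⁻¹

/-- the smallest singular value of a matrix -/
def sigmaMin {n r : ℕ} (A : Matrix (Fin n) (Fin r) ℝ) : ℝ :=
  sInf {c | ∃ x : EuclideanSpace ℝ (Fin r), ‖x‖ = 1 ∧ c = ‖Matrix.toEuclideanLin A x‖}

variable {n r : ℕ}

lemma herm_spectral_real {m : ℕ} {M : Matrix (Fin m) (Fin m) ℝ} (hM : M.IsHermitian) :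
    M = (hM.eigenvectorUnitary : Matrix (Fin m) (Fin m) ℝ) * diagonal hM.eigenvalues *
      (star hM.eigenvectorUnitary : Matrix (Fin m) (Fin m) ℝ) := by
  conv_lhs => rw [hM.spectral_theorem]
  simp [Unitary.conjStarAlgAut_apply]

abbrev Matrix.PosSemidef.sqrt {m : ℕ} {M : Matrix (Fin m) (Fin m) ℝ} (hM : M.PosSemidef) :
    Matrix (Fin m) (Fin m) ℝ :=
  posSemidefSqrt hM

lemma Matrix.PosSemidef.sqrt_mul_self {m : ℕ} {M : Matrix (Fin m) (Fin m) ℝ}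
    (hM : M.PosSemidef) : hM.sqrt * hM.sqrt = M := by
  have hU : (star hM.1.eigenvectorUnitary : Matrix (Fin m) (Fin m) ℝ) *
      (hM.1.eigenvectorUnitary : Matrix (Fin m) (Fin m) ℝ) = 1 := by simp
  have hd : diagonal ((↑) ∘ (Real.sqrt ∘ hM.1.eigenvalues)) *
      diagonal ((↑) ∘ (Real.sqrt ∘ hM.1.eigenvalues)) = diagonal hM.1.eigenvalues := by
    rw [diagonal_mul_diagonal]; congr 1; funext i
    simp [Real.mul_self_sqrt (hM.eigenvalues_nonneg i)]
  unfold Matrix.PosSemidef.sqrt posSemidefSqrt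
  conv_rhs => rw [herm_spectral_real hM.1]
  simp only [Matrix.mul_assoc]
  rw [← Matrix.mul_assoc (star _ : Matrix (Fin m) (Fin m) ℝ), hU, Matrix.one_mul,
    ← Matrix.mul_assoc (diagonal _), hd]

lemma Matrix.PosSemidef.posSemidef_sqrt {m : ℕ} {M : Matrix (Fin m) (Fin m) ℝ}
    (hM : M.PosSemidef) : hM.sqrt.PosSemidef := by
  have hD : (diagonal ((↑) ∘ (Real.sqrt ∘ hM.1.eigenvalues)) :
      Matrix (Fin m) (Fin m) ℝ).PosSemidef := by
    rw [Matrix.posSemidef_diagonal_iff]; intro i; simp [Real.sqrt_nonneg]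
  have := hD.mul_mul_conjTranspose_same (hM.1.eigenvectorUnitary : Matrix (Fin m) (Fin m) ℝ)
  unfold Matrix.PosSemidef.sqrt posSemidefSqrt
  simpa [Matrix.star_eq_conjTranspose] using this



lemma trace_transpose_mul_eq (U V : Matrix (Fin n) (Fin r) ℝ) :
    trace (Uᵀ * V) = ∑ i, ∑ j, U i j * V i j := by
  simp only [Matrix.trace, Matrix.diag, Matrix.mul_apply, Matrix.transpose_apply]
  exact Finset.sum_comm ..

lemma psd_diag_trace_nonneg {m : ℕ} {M : Matrix (Fin m) (Fin m) ℝ} (hM : M.PosSemidef) :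
    0 ≤ trace M := by
  apply Finset.sum_nonneg
  intro i _
  exact hM.diag_nonneg

lemma trace_mul_psd_nonneg {m : ℕ} {S M : Matrix (Fin m) (Fin m) ℝ}
    (hS : S.PosSemidef) (hM : M.PosSemidef) : 0 ≤ trace (S * M) := by
  have h1 : trace (S * M) = trace (hS.sqrt * M * hS.sqrt) := by
    conv_lhs => rw [← hS.sqrt_mul_self, mul_assoc, trace_mul_comm]
  rw [h1]
  have h2 : (hS.sqrt * M * hS.sqrt).PosSemidef := by
    have := hM.conjTranspose_mul_mul_same hS.sqrt
    rwa [hS.posSemidef_sqrt.isHermitian.eq] at this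
  exact psd_diag_trace_nonneg h2

lemma isUnit_of_rank_eq {m : ℕ} (M : Matrix (Fin m) (Fin m) ℝ) (h : M.rank = m) : IsUnit M := by
  rw [← Matrix.mulVec_surjective_iff_isUnit]
  have hrange : LinearMap.range M.mulVecLin = ⊤ := by
    apply Submodule.eq_top_of_finrank_eq
    rw [Matrix.rank] at h
    rw [h]
    simp [Module.finrank_fin_fun]
  intro y
  obtain ⟨x, hx⟩ := LinearMap.range_eq_top.mp hrange y
  exact ⟨x, hx⟩

lemma sqrt_isUnit {A : Matrix (Fin n) (Fin r) ℝ} (hA : A.rank = r) :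
    IsUnit ((psd_AtA A).sqrt) := by
  set H := (psd_AtA A).sqrt with hHdef
  apply isUnit_of_rank_eq
  have h1 : (H * H).rank = r := by
    rw [(psd_AtA A).sqrt_mul_self, Matrix.rank_transpose_mul_self, hA]
  have h2 : (H * H).rank ≤ H.rank := Matrix.rank_mul_le_left H H
  have h3 : H.rank ≤ r := (Matrix.rank_le_card_width H).trans (by simp)
  omega


lemma polar_mul_sqrt {A : Matrix (Fin n) (Fin r) ℝ} (hA : A.rank = r) :
    polarFactor A * (psd_AtA A).sqrt = A := by
  have hdet : IsUnit ((psd_AtA A).sqrt).det :=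
    (Matrix.isUnit_iff_isUnit_det _).mp (sqrt_isUnit hA)
  rw [polarFactor, Matrix.mul_assoc, Matrix.nonsing_inv_mul _ hdet, Matrix.mul_one]

lemma polar_ortho {A : Matrix (Fin n) (Fin r) ℝ} (hA : A.rank = r) :
    (polarFactor A)ᵀ * polarFactor A = 1 := by
  have hdet : IsUnit ((psd_AtA A).sqrt).det :=
    (Matrix.isUnit_iff_isUnit_det _).mp (sqrt_isUnit hA)
  have hsym : ((psd_AtA A).sqrt)ᵀ = (psd_AtA A).sqrt := by
    have := (psd_AtA A).posSemidef_sqrt.isHermitian.eq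
    rwa [Matrix.conjTranspose_eq_transpose_of_trivial] at this
  rw [polarFactor, Matrix.transpose_mul, Matrix.transpose_nonsing_inv, hsym]
  calc ((psd_AtA A).sqrt)⁻¹ * Aᵀ * (A * ((psd_AtA A).sqrt)⁻¹)
      = ((psd_AtA A).sqrt)⁻¹ * (Aᵀ * A) * ((psd_AtA A).sqrt)⁻¹ := by
        simp only [Matrix.mul_assoc]
    _ = ((psd_AtA A).sqrt)⁻¹ * ((psd_AtA A).sqrt * (psd_AtA A).sqrt) * ((psd_AtA A).sqrt)⁻¹ := by
        rw [(psd_AtA A).sqrt_mul_self]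
    _ = 1 := by
        rw [← Matrix.mul_assoc, Matrix.nonsing_inv_mul _ hdet, one_mul,
          Matrix.mul_nonsing_inv _ hdet]

lemma norm_toEuclideanLin_sq (A : Matrix (Fin n) (Fin r) ℝ) (v : EuclideanSpace ℝ (Fin r)) :
    ‖Matrix.toEuclideanLin A v‖ ^ 2 = (A *ᵥ ⇑v) ⬝ᵥ (A *ᵥ ⇑v) := by
  rw [EuclideanSpace.norm_eq, Real.sq_sqrt (by positivity)]
  simp [Matrix.toEuclideanLin_apply, dotProduct, Real.norm_eq_abs, sq_abs, pow_two]

example (A : Matrix (Fin n) (Fin r) ℝ) (v : EuclideanSpace ℝ (Fin r)) :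
    (A *ᵥ ⇑v) ⬝ᵥ (A *ᵥ ⇑v) = ((Aᵀ * A) *ᵥ ⇑v) ⬝ᵥ ⇑v := by
  rw [Matrix.dotProduct_mulVec, ← Matrix.mulVec_transpose, Matrix.mulVec_mulVec]

lemma dotProduct_mulVec_self (A : Matrix (Fin n) (Fin r) ℝ) (v : Fin r → ℝ) :
    (A *ᵥ v) ⬝ᵥ (A *ᵥ v) = ((Aᵀ * A) *ᵥ v) ⬝ᵥ v := by
  rw [Matrix.dotProduct_mulVec, ← Matrix.mulVec_transpose, Matrix.mulVec_mulVec]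

lemma dotProduct_self_eq_norm_sq (v : EuclideanSpace ℝ (Fin r)) : ⇑v ⬝ᵥ ⇑v = ‖v‖ ^ 2 := by
  rw [EuclideanSpace.norm_eq, Real.sq_sqrt (by positivity)]
  simp [dotProduct, Real.norm_eq_abs, sq_abs, pow_two]

lemma sig_bddBelow (A : Matrix (Fin n) (Fin r) ℝ) :
    BddBelow {c | ∃ x : EuclideanSpace ℝ (Fin r), ‖x‖ = 1 ∧ c = ‖Matrix.toEuclideanLin A x‖} :=
  ⟨0, fun c hc => by obtain ⟨x, _, rfl⟩ := hc; exact norm_nonneg _⟩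

lemma sigmaMin_le (A : Matrix (Fin n) (Fin r) ℝ) (x : EuclideanSpace ℝ (Fin r)) (hx : ‖x‖ = 1) :
    sigmaMin A ≤ ‖Matrix.toEuclideanLin A x‖ :=
  csInf_le (sig_bddBelow A) ⟨x, hx, rfl⟩

lemma sigmaMin_le_eigenvalues {A : Matrix (Fin n) (Fin r) ℝ} (hA : A.rank = r) (i : Fin r) :
    sigmaMin A ≤ ((psd_AtA A).posSemidef_sqrt.isHermitian).eigenvalues i := by
  set H := (psd_AtA A).sqrt with hHdef
  set hH := (psd_AtA A).posSemidef_sqrt.isHermitian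
  set μ := hH.eigenvalues i with hμdef
  set v := hH.eigenvectorBasis i with hvdef
  have hv1 : ‖v‖ = 1 := (hH.eigenvectorBasis.orthonormal).1 i
  have hμ0 : 0 ≤ μ := (psd_AtA A).posSemidef_sqrt.eigenvalues_nonneg i
  have hHv : H *ᵥ ⇑v = μ • ⇑v := hH.mulVec_eigenvectorBasis i
  have hnorm : ‖Matrix.toEuclideanLin A v‖ ^ 2 = μ ^ 2 := by
    rw [norm_toEuclideanLin_sq, dotProduct_mulVec_self, ← (psd_AtA A).sqrt_mul_self, ← hHdef,
      ← Matrix.mulVec_mulVec, hHv, Matrix.mulVec_smul, hHv]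
    rw [smul_smul, smul_dotProduct, dotProduct_self_eq_norm_sq, hv1]
    rw [one_pow, smul_eq_mul, mul_one]
    ring
  have : ‖Matrix.toEuclideanLin A v‖ = μ := by
    rw [← Real.sqrt_sq (norm_nonneg _), hnorm, Real.sqrt_sq hμ0]
  rw [← this]
  exact sigmaMin_le A v hv1

lemma psd_sqrt_sub_sigma {A : Matrix (Fin n) (Fin r) ℝ} (hA : A.rank = r) :
    ((psd_AtA A).sqrt - sigmaMin A • 1).PosSemidef := by
  set H := (psd_AtA A).sqrt with hHdef
  set hH := (psd_AtA A).posSemidef_sqrt.isHermitian with hhHdef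
  set U : Matrix (Fin r) (Fin r) ℝ := (hH.eigenvectorUnitary : Matrix (Fin r) (Fin r) ℝ) with hUdef
  have hU1 : U * star U = 1 := (Matrix.mem_unitaryGroup_iff).mp hH.eigenvectorUnitary.2
  have hspec : H = U * Matrix.diagonal hH.eigenvalues * star U := by
    exact herm_spectral_real hH
  have key : H - sigmaMin A • 1 =
      U * Matrix.diagonal (fun i => hH.eigenvalues i - sigmaMin A) * star U := by
    have hdiag : Matrix.diagonal (fun i => hH.eigenvalues i - sigmaMin A) =
        Matrix.diagonal hH.eigenvalues - sigmaMin A • 1 := by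
      rw [Matrix.smul_one_eq_diagonal, Matrix.diagonal_sub]
    rw [hdiag, Matrix.mul_sub, Matrix.sub_mul, ← hspec]
    congr 1
    rw [Matrix.mul_smul, Matrix.smul_mul, Matrix.mul_one, hU1]
  rw [key]
  have hpsd : (Matrix.diagonal (fun i => hH.eigenvalues i - sigmaMin A)).PosSemidef := by
    rw [Matrix.posSemidef_diagonal_iff]
    intro i
    have := sigmaMin_le_eigenvalues hA i
    simp only [sub_nonneg]
    exact this
  have := hpsd.mul_mul_conjTranspose_same U
  rwa [← Matrix.star_eq_conjTranspose] at this

lemma sigmaMin_pos {A : Matrix (Fin n) (Fin r) ℝ} (hA : A.rank = r) (hr : 0 < r) :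
    0 < sigmaMin A := by
  have : NeZero r := ⟨hr.ne'⟩
  -- injectivity of mulVec A
  have hAtA : IsUnit (Aᵀ * A) := by
    apply isUnit_of_rank_eq
    rw [Matrix.rank_transpose_mul_self, hA]
  have hinj : ∀ x : Fin r → ℝ, A *ᵥ x = 0 → x = 0 := by
    intro x hx
    have h2 : (Aᵀ * A) *ᵥ x = 0 := by
      rw [← Matrix.mulVec_mulVec, hx, Matrix.mulVec_zero]
    have := Matrix.mulVec_injective_iff_isUnit.mpr hAtA
    have h3 : (Aᵀ * A) *ᵥ x = (Aᵀ * A) *ᵥ 0 := by rw [h2, Matrix.mulVec_zero]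
    exact this h3
  -- compactness
  set f : EuclideanSpace ℝ (Fin r) → ℝ := fun x => ‖Matrix.toEuclideanLin A x‖ with hf
  have hcont : Continuous f := by
    have : Continuous (Matrix.toEuclideanLin A : EuclideanSpace ℝ (Fin r) →ₗ[ℝ] _) :=
      LinearMap.continuous_of_finiteDimensional _
    exact this.norm
  have hsphere : (Metric.sphere (0 : EuclideanSpace ℝ (Fin r)) 1).Nonempty := by
    apply NormedSpace.sphere_nonempty.mpr
    norm_num
  obtain ⟨x₀, hx₀mem, hx₀min⟩ :=
    (isCompact_sphere (0 : EuclideanSpace ℝ (Fin r)) 1).exists_isMinOn hsphere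
      hcont.continuousOn
  have hx₀norm : ‖x₀‖ = 1 := mem_sphere_zero_iff_norm.mp hx₀mem
  have hset : {c | ∃ x : EuclideanSpace ℝ (Fin r), ‖x‖ = 1 ∧ c = ‖Matrix.toEuclideanLin A x‖}
      = f '' Metric.sphere 0 1 := by
    ext c
    simp only [Set.mem_setOf_eq, Set.mem_image, mem_sphere_zero_iff_norm]
    constructor
    · rintro ⟨x, hx, rfl⟩; exact ⟨x, hx, rfl⟩
    · rintro ⟨x, hx, rfl⟩; exact ⟨x, hx, rfl⟩
  have hval : sigmaMin A = f x₀ := by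
    rw [sigmaMin, hset]
    apply IsLeast.csInf_eq
    constructor
    · exact ⟨x₀, hx₀mem, rfl⟩
    · rintro c ⟨x, hx, rfl⟩
      exact hx₀min hx
  rw [hval]
  have h0 : f x₀ ≠ 0 := by
    intro h
    have : Matrix.toEuclideanLin A x₀ = 0 := norm_eq_zero.mp h
    have hAv : A *ᵥ ⇑x₀ = 0 := by
      have := congrArg (WithLp.equiv 2 (Fin n → ℝ)) this
      simpa [Matrix.toEuclideanLin_apply] using this
    have : ⇑x₀ = 0 := hinj _ hAv
    have : x₀ = 0 := by
      ext i
      exact congrFun this i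
    rw [this] at hx₀norm
    simp at hx₀norm
  exact lt_of_le_of_ne (norm_nonneg _) (Ne.symm h0)


lemma frob_nonneg (A : Matrix (Fin n) (Fin r) ℝ) : 0 ≤ frob A := Real.sqrt_nonneg _

lemma frob_sq (A : Matrix (Fin n) (Fin r) ℝ) : frob A ^ 2 = trace (Aᵀ * A) := by
  rw [frob, Real.sq_sqrt (by positivity), trace_transpose_mul_eq]
  congr 1; ext i; congr 1; ext j; ring

lemma trace_CS (T E : Matrix (Fin n) (Fin r) ℝ) : trace (Tᵀ * E) ≤ frob T * frob E := by
  rw [trace_transpose_mul_eq, frob, frob]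
  have h1 : ∑ i, ∑ j, T i j * E i j = ∑ p : Fin n × Fin r, T p.1 p.2 * E p.1 p.2 :=
    (Fintype.sum_prod_type (f := fun p : Fin n × Fin r => T p.1 p.2 * E p.1 p.2)).symm
  have h2 : ∑ i, ∑ j, T i j ^ 2 = ∑ p : Fin n × Fin r, T p.1 p.2 ^ 2 :=
    (Fintype.sum_prod_type (f := fun p : Fin n × Fin r => T p.1 p.2 ^ 2)).symm
  have h3 : ∑ i, ∑ j, E i j ^ 2 = ∑ p : Fin n × Fin r, E p.1 p.2 ^ 2 :=
    (Fintype.sum_prod_type (f := fun p : Fin n × Fin r => E p.1 p.2 ^ 2)).symm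
  rw [h1, h2, h3]
  have hCS := Finset.sum_mul_sq_le_sq_mul_sq Finset.univ (fun p : Fin n × Fin r => T p.1 p.2)
    (fun p => E p.1 p.2)
  calc ∑ p : Fin n × Fin r, T p.1 p.2 * E p.1 p.2
      ≤ |∑ p : Fin n × Fin r, T p.1 p.2 * E p.1 p.2| := le_abs_self _
    _ = Real.sqrt ((∑ p : Fin n × Fin r, T p.1 p.2 * E p.1 p.2) ^ 2) :=
        (Real.sqrt_sq_eq_abs _).symm
    _ ≤ Real.sqrt ((∑ p : Fin n × Fin r, T p.1 p.2 ^ 2) * ∑ p : Fin n × Fin r, E p.1 p.2 ^ 2) :=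
        Real.sqrt_le_sqrt hCS
    _ = _ := Real.sqrt_mul (by positivity) _


/-- perturbation bound for polar factors: for full column rank `X̄, Ȳ`,
`‖Ŷ − X̂‖_F ≤ (2/(σ_r(X̄) + σ_r(Ȳ))) ‖Ȳ − X̄‖_F`. -/
theorem polarFactor_perturbation {n r : ℕ}
    (Xbar Ybar : Matrix (Fin n) (Fin r) ℝ)
    (hX : Xbar.rank = r) (hY : Ybar.rank = r) :
    frob (polarFactor Ybar - polarFactor Xbar) ≤
      2 / (sigmaMin Xbar + sigmaMin Ybar) * frob (Ybar - Xbar) := by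
  rcases Nat.eq_zero_or_pos r with hr | hr
  · subst hr
    simp [frob]
  set HX := (psd_AtA Xbar).sqrt with hHXdef
  set HY := (psd_AtA Ybar).sqrt with hHYdef
  set P := polarFactor Xbar with hPdef
  set Q := polarFactor Ybar with hQdef
  set T := Q - P with hTdef
  set E := Ybar - Xbar with hEdef
  set c := sigmaMin Xbar + sigmaMin Ybar with hcdef
  have hc : 0 < c := add_pos (sigmaMin_pos hX hr) (sigmaMin_pos hY hr)
  have hPX : P * HX = Xbar := polar_mul_sqrt hX
  have hQY : Q * HY = Ybar := polar_mul_sqrt hY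
  have hPtP : Pᵀ * P = 1 := polar_ortho hX
  have hQtQ : Qᵀ * Q = 1 := polar_ortho hY
  have hHXsym : HXᵀ = HX := by
    have := (psd_AtA Xbar).posSemidef_sqrt.isHermitian.eq
    rwa [Matrix.conjTranspose_eq_transpose_of_trivial] at this
  have hHYsym : HYᵀ = HY := by
    have := (psd_AtA Ybar).posSemidef_sqrt.isHermitian.eq
    rwa [Matrix.conjTranspose_eq_transpose_of_trivial] at this
  -- matrix identity
  have h2E : T * (HX + HY) + (Q + P) * (HY - HX) = E + E := by
    rw [hTdef, hEdef, ← hPX, ← hQY]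
    simp only [Matrix.sub_mul, Matrix.add_mul, Matrix.mul_add, Matrix.mul_sub]
    abel
  -- trace split
  have htr : trace (Tᵀ * (T * (HX + HY))) + trace (Tᵀ * ((Q + P) * (HY - HX)))
      = trace (Tᵀ * E) + trace (Tᵀ * E) := by
    rw [← Matrix.trace_add, ← Matrix.mul_add, h2E, Matrix.mul_add, Matrix.trace_add]
  -- skew term vanishes
  have hskew : trace (Tᵀ * ((Q + P) * (HY - HX))) = 0 := by
    set M := Tᵀ * (Q + P) with hMdef
    have hM : Mᵀ = -M := by
      rw [hMdef, Matrix.transpose_mul, Matrix.transpose_transpose]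
      rw [hTdef]
      simp only [Matrix.transpose_add, Matrix.transpose_sub, Matrix.add_mul, Matrix.mul_add,
        Matrix.sub_mul, Matrix.mul_sub, hQtQ, hPtP]
      abel
    have hS : (HY - HX)ᵀ = HY - HX := by rw [Matrix.transpose_sub, hHXsym, hHYsym]
    have h1 : trace (Tᵀ * ((Q + P) * (HY - HX))) = trace (M * (HY - HX)) := by
      rw [hMdef, Matrix.mul_assoc]
    have h2 : trace (M * (HY - HX)) = - trace (M * (HY - HX)) := by
      conv_lhs => rw [← Matrix.trace_transpose, Matrix.transpose_mul, hS, hM]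
      rw [Matrix.mul_neg, Matrix.trace_neg, Matrix.trace_mul_comm]
    rw [h1]
    linarith
  -- PSD bound
  have hpsd : ((HX + HY) - c • 1).PosSemidef := by
    have h := (psd_sqrt_sub_sigma hX).add (psd_sqrt_sub_sigma hY)
    have : (HX - sigmaMin Xbar • 1) + (HY - sigmaMin Ybar • 1) = (HX + HY) - c • 1 := by
      rw [hcdef, add_smul]
      abel
    rwa [this] at h
  have hbound : c * trace (Tᵀ * T) ≤ trace (Tᵀ * T * (HX + HY)) := by
    have h0 := trace_mul_psd_nonneg (psd_AtA T) hpsd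
    rw [Matrix.mul_sub, Matrix.trace_sub, Matrix.mul_smul, Matrix.mul_one, Matrix.trace_smul,
      smul_eq_mul] at h0
    linarith
  -- combine
  have hCS := trace_CS T E
  have hfT : frob T ^ 2 = trace (Tᵀ * T) := frob_sq T
  have hchain : c * frob T ^ 2 ≤ 2 * (frob T * frob E) := by
    have e1 : trace (Tᵀ * T * (HX + HY)) = trace (Tᵀ * (T * (HX + HY))) := by
      rw [Matrix.mul_assoc]
    have e2 : trace (Tᵀ * (T * (HX + HY))) = 2 * trace (Tᵀ * E) := by
      have := htr
      rw [hskew, add_zero] at this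
      linarith
    calc c * frob T ^ 2 = c * trace (Tᵀ * T) := by rw [hfT]
      _ ≤ trace (Tᵀ * T * (HX + HY)) := hbound
      _ = 2 * trace (Tᵀ * E) := by rw [e1, e2]
      _ ≤ 2 * (frob T * frob E) := by linarith
  rcases eq_or_lt_of_le (frob_nonneg T) with hT0 | hT0
  · rw [← hT0]
    have h1 : 0 ≤ frob E := frob_nonneg E
    have h2 : 0 ≤ 2 / c := by positivity
    exact mul_nonneg h2 h1
  · have h1 : c * frob T ≤ 2 * frob E := by
      have h2 : c * frob T * frob T ≤ 2 * frob E * frob T := by nlinarith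
      exact le_of_mul_le_mul_right h2 hT0
    rw [div_mul_eq_mul_div, le_div_iff₀ hc]
    linarith


end
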